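/- Let ≈ be an SCER and T a string. For any 1 ≤ i ≤ n, with b = Border_T[i], the set of proper ≈-covers of T[1:i] (strings ≈-equivalent to T[1:i] excluded) equals the set of strings that are simultaneously left ≈-seeds of T[1:i] and ≈-covers of T[1:b]. Consequently, LCover_T[i] = max({l : T[1:l] is a left ≈-seed of T[1:i] and a ≈-cover of T[1:b]} ∪ {0}). -/

import Mathlib

variable {α : Type*}

/-- `substr X i j` is the 1-indexed inclusive substring `X[i:j]`. -/
def substr (X : List α) (i j : ℕ) : List α := (X.take j).drop (i - 1)

/-- A substring consistent equivalence relation (SCER). -/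
structure SCER (r : List α → List α → Prop) : Prop where
  equiv : Equivalence r
  length_eq : ∀ X Y, r X Y → X.length = Y.length
  substr_congr : ∀ X Y, r X Y → ∀ i j, 1 ≤ i → i ≤ j → j ≤ X.length →
    r (substr X i j) (substr Y i j)

/-- `B` is a `≈`-border of `T`: `B` is equivalent to a prefix and a suffix of `T`. -/
def IsBorder (r : List α → List α → Prop) (B T : List α) : Prop :=
  B.length ≤ T.length ∧ r B (T.take B.length) ∧ r B (T.drop (T.length - B.length))

/-- `C` is a `≈`-cover of `T`: there are occurrences `x 1 = 1 < ... < x m = |T|-|C|+1`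
with consecutive gaps at most `|C|`. -/
def IsCover (r : List α → List α → Prop) (C T : List α) : Prop :=
  ∃ (m : ℕ) (x : ℕ → ℕ), 1 ≤ m ∧ x 1 = 1 ∧ x m = T.length - C.length + 1 ∧
    (∀ k, 1 ≤ k → k ≤ m → r C (substr T (x k) (x k + C.length - 1))) ∧
    (∀ k, 1 < k → k ≤ m → x (k - 1) < x k ∧ x k ≤ x (k - 1) + C.length)

def IsProperCover (r : List α → List α → Prop) (C T : List α) : Prop :=
  IsCover r C T ∧ C.length < T.length

/-- A string is primitive if it has no proper `≈`-cover. -/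
def Primitive (r : List α → List α → Prop) (T : List α) : Prop :=
  ¬ ∃ C : List α, IsProperCover r C T

/-- `S` is a left `≈`-seed of `T`. -/
def IsLeftSeed (r : List α → List α → Prop) (S T : List α) : Prop :=
  ∃ k l, k ≤ l ∧ l < S.length ∧ IsCover r S (T.take (T.length - k)) ∧
    r (S.take l) (T.drop (T.length - l))

/-- `Bd` is the `≈`-border array of `T`:
`Bd i` is the maximum length of a proper `≈`-border of `T[1:i]`. -/
def BorderArr (r : List α → List α → Prop) (T : List α) (Bd : ℕ → ℕ) : Prop :=
  ∀ i, 1 ≤ i → i ≤ T.length →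
    IsGreatest {b | ∃ B : List α, B.length = b ∧ b < i ∧ IsBorder r B (T.take i)} (Bd i)

/-- `L` is the longest `≈`-cover array of `T`:
`L i = max({|C| : C proper ≈-cover of T[1:i]} ∪ {0})`. -/
def LCoverArr (r : List α → List α → Prop) (T : List α) (L : ℕ → ℕ) : Prop :=
  ∀ i, 1 ≤ i → i ≤ T.length →
    IsGreatest (insert 0 {c | ∃ C : List α, C.length = c ∧ IsProperCover r C (T.take i)})
      (L i)

section Helpers

variable {r : List α → List α → Prop}

lemma substr_one (U : List α) (j : ℕ) : substr U 1 j = U.take j := by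
  simp [substr]

lemma substr_take (U : List α) (s p j : ℕ) (hj : j ≤ s) :
    substr (U.take s) p j = substr U p j := by
  simp [substr, List.take_take, Nat.min_eq_left hj]

lemma substr_drop (U : List α) (a p j : ℕ) (hp : 1 ≤ p) :
    substr (U.drop a) p j = substr U (a + p) (a + j) := by
  simp only [substr, List.take_drop, List.drop_drop]
  congr 1
  omega

lemma substr_last (U : List α) (c : ℕ) (hc : c ≤ U.length) :
    substr U (U.length - c + 1) ((U.length - c + 1) + c - 1) = U.drop (U.length - c) := by
  have h1 : (U.length - c + 1) + c - 1 = U.length := by omega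
  rw [h1]
  simp [substr, List.take_length]

lemma substr_length (U : List α) (p j : ℕ) :
    (substr U p j).length = min j U.length - (p - 1) := by
  simp [substr]

/-- first occurrence of a cover -/
lemma IsCover.occ1 (h : IsCover r C U) : r C (substr U 1 (1 + C.length - 1)) := by
  obtain ⟨m, x, hm, hx1, hxm, hocc, hgap⟩ := h
  have := hocc 1 le_rfl hm
  rwa [hx1] at this

lemma IsCover.occ_last (h : IsCover r C U) :
    r C (substr U (U.length - C.length + 1) ((U.length - C.length + 1) + C.length - 1)) := by
  obtain ⟨m, x, hm, hx1, hxm, hocc, hgap⟩ := h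
  have := hocc m hm le_rfl
  rwa [hxm] at this

lemma IsCover.len_le (hr : SCER r) (hc : 1 ≤ C.length) (h : IsCover r C U) :
    C.length ≤ U.length := by
  have h0 := h.occ1
  have h1 : 1 + C.length - 1 = C.length := by omega
  rw [h1, substr_one] at h0
  have := hr.length_eq _ _ h0
  simp at this
  omega

lemma IsCover.pos (h : IsCover r C U) (hlt : C.length < U.length) : 1 ≤ C.length := by
  by_contra hc
  have hc0 : C.length = 0 := by omega
  obtain ⟨m, x, hm, hx1, hxm, hocc, hgap⟩ := h
  rw [hc0] at hxm
  rcases eq_or_lt_of_le hm with hm1 | hm2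
  · rw [← hm1] at hxm; omega
  · have := hgap m hm2 le_rfl
    rw [hc0] at this
    omega

/-- any half-open window `(t, t+|C|]` with `t < |U|-|C|+1` contains an occurrence -/
lemma IsCover.window (h : IsCover r C U) (hc : 1 ≤ C.length) (t : ℕ)
    (ht : t < U.length - C.length + 1) :
    ∃ y, 1 ≤ y ∧ y ≤ U.length - C.length + 1 ∧ t < y ∧ y ≤ t + C.length ∧
      r C (substr U y (y + C.length - 1)) := by
  classical
  obtain ⟨m, x, hm, hx1, hxm, hocc, hgap⟩ := h
  have mono : ∀ k, k ≤ m → ∀ j, 1 ≤ j → j ≤ k → x j ≤ x k := by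
    intro k
    induction k with
    | zero => intro _ j hj hjk; omega
    | succ k ih =>
      intro hkm j hj hjk
      rcases eq_or_lt_of_le hjk with hjk1 | hjk2
      · rw [hjk1]
      · have hk1 : 1 < k + 1 := by omega
        have := hgap (k + 1) hk1 hkm
        simp only [Nat.add_sub_cancel] at this
        have hjk' : j ≤ k := by omega
        have := ih (by omega) j hj hjk'
        omega
  rcases Nat.eq_zero_or_pos t with ht0 | ht1
  · refine ⟨1, le_rfl, by omega, by omega, by omega, ?_⟩
    have := hocc 1 le_rfl hm
    rwa [hx1] at this
  · set P : ℕ → Prop := fun k => k ≤ m ∧ x k ≤ t with hP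
    set k0 := Nat.findGreatest P m with hk0
    have hP1 : P 1 := ⟨hm, by rw [hx1]; omega⟩
    have hk01 : 1 ≤ k0 := Nat.le_findGreatest hm hP1
    have hPk0 : P k0 := Nat.findGreatest_spec hm hP1
    have hk0m : k0 < m := by
      rcases eq_or_lt_of_le hPk0.1 with h' | h'
      · exfalso; have := hPk0.2; rw [h', hxm] at this; omega
      · exact h'
    have hnP : ¬ P (k0 + 1) := Nat.findGreatest_is_greatest (n := m) (by omega) (by omega)
    have hxk1 : t < x (k0 + 1) := by
      by_contra hcon
      exact hnP ⟨by omega, by omega⟩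
    have hgap' := hgap (k0 + 1) (by omega) (by omega)
    simp only [Nat.add_sub_cancel] at hgap'
    refine ⟨x (k0 + 1), by omega, ?_, hxk1, by have := hPk0.2; omega, hocc (k0 + 1) (by omega) (by omega)⟩
    have := mono m le_rfl (k0 + 1) (by omega) (by omega)
    omega

/-- build a cover from a set of occurrences with the successor property -/
lemma cover_of_set (C U : List α) (S : ℕ → Prop)
    (h1 : S 1) (hM : S (U.length - C.length + 1))
    (hub : ∀ p, S p → 1 ≤ p ∧ p ≤ U.length - C.length + 1 ∧ r C (substr U p (p + C.length - 1)))
    (hsucc : ∀ p, S p → p < U.length - C.length + 1 →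
      ∃ q, S q ∧ p < q ∧ q ≤ p + C.length) :
    IsCover r C U := by
  set M := U.length - C.length + 1 with hMdef
  haveI : ∀ p : ℕ, Decidable (S p ∧ p < M) := fun p => Classical.propDecidable _
  let g : ℕ → ℕ := fun n => Nat.rec 1
    (fun _ prev => if h : S prev ∧ prev < M then Classical.choose (hsucc prev h.1 h.2) else prev) n
  have g0 : g 0 = 1 := rfl
  have gstep : ∀ n, g (n + 1) =
      if h : S (g n) ∧ g n < M then Classical.choose (hsucc (g n) h.1 h.2) else g n :=
    fun n => rfl
  have inv : ∀ n, S (g n) ∧ g n ≤ M := by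
    intro n
    induction n with
    | zero => exact ⟨h1, (hub 1 h1).2.1⟩
    | succ n ih =>
      by_cases hcond : S (g n) ∧ g n < M
      · rw [gstep n, dif_pos hcond]
        have spec := Classical.choose_spec (hsucc (g n) hcond.1 hcond.2)
        exact ⟨spec.1, (hub _ spec.1).2.1⟩
      · rw [gstep n, dif_neg hcond]; exact ih
  have grow : ∀ n, g n = M ∨ n + 1 ≤ g n := by
    intro n
    induction n with
    | zero => right; rw [g0]
    | succ n ih =>
      rcases lt_or_eq_of_le (inv n).2 with hlt | heq
      · have hcond : S (g n) ∧ g n < M := ⟨(inv n).1, hlt⟩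
        have spec := Classical.choose_spec (hsucc (g n) hcond.1 hcond.2)
        rw [gstep n, dif_pos hcond]
        rcases ih with h' | h'
        · omega
        · right; omega
      · left; rw [gstep n, dif_neg (by omega)]; exact heq
  have hgM : g M = M := by
    rcases grow M with h' | h'
    · exact h'
    · have := (inv M).2; omega
  have hex : {n | g n = M}.Nonempty := ⟨M, hgM⟩
  set m' := sInf {n | g n = M} with hm'
  have hgm' : g m' = M := Nat.sInf_mem hex
  refine ⟨m' + 1, fun k => g (k - 1), by omega, by simpa using g0, by simpa using hgm', ?_, ?_⟩
  · intro k hk1 hkm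
    exact (hub _ (inv (k - 1)).1).2.2
  · intro k hk1 hkm
    have hk2 : k - 1 - 1 = k - 2 := by omega
    have hlt' : k - 2 < m' := by
      by_contra hcon
      have : m' ≤ k - 2 := by omega
      have h2' : k - 1 ≤ m' := by omega
      have : k - 2 = m' := by omega
      -- then k-1 = m'+1 > m', but k ≤ m'+1 gives k-1 ≤ m', so k-2 ≤ m'-1 unless m' = 0
      omega
    have hne : g (k - 2) ≠ M := Nat.notMem_of_lt_sInf (s := {n | g n = M}) hlt'
    have hcond : S (g (k - 2)) ∧ g (k - 2) < M := ⟨(inv (k - 2)).1, by have := (inv (k - 2)).2; omega⟩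
    have hstep : g (k - 2 + 1) = Classical.choose (hsucc (g (k - 2)) hcond.1 hcond.2) := by
      rw [gstep (k - 2), dif_pos hcond]
    have spec := Classical.choose_spec (hsucc (g (k - 2)) hcond.1 hcond.2)
    have hkk : k - 1 = k - 2 + 1 := by omega
    show g (k - 1 - 1) < g (k - 1) ∧ g (k - 1) ≤ g (k - 1 - 1) + C.length
    rw [hk2, hkk, hstep]
    exact ⟨spec.2.1, spec.2.2⟩

lemma IsCover.congr (hr : SCER r) (h : IsCover r C U) (hCC : r C C') : IsCover r C' U := by
  obtain ⟨m, x, hm, hx1, hxm, hocc, hgap⟩ := h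
  have hlen : C.length = C'.length := hr.length_eq _ _ hCC
  refine ⟨m, x, hm, hx1, by rw [← hlen]; exact hxm, ?_, ?_⟩
  · intro k hk1 hkm
    rw [← hlen]
    exact hr.equiv.trans (hr.equiv.symm hCC) (hocc k hk1 hkm)
  · intro k hk1 hkm
    rw [← hlen]
    exact hgap k hk1 hkm

end Helpers

section Main

variable {r : List α → List α → Prop}

/-- transport of an occurrence in the border `T[1:b]` to an occurrence in the
corresponding suffix of `T[1:i]`. -/
lemma border_transport (hr : SCER r) {T : List α} {i b c : ℕ} (hbi : b < i) (h2 : i ≤ T.length)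
    (hcb : c ≤ b) (hc1 : 1 ≤ c)
    (hbord : r (T.take b) ((T.take i).drop (i - b)))
    (q : ℕ) (hq1 : 1 ≤ q) (hq2 : q ≤ b - c + 1) :
    r (substr (T.take b) q (q + c - 1)) (substr (T.take i) (i - b + q) ((i - b + q) + c - 1)) := by
  have hlb : (T.take b).length = b := by rw [List.length_take]; omega
  have h := hr.substr_congr _ _ hbord q (q + c - 1) hq1 (by omega) (by rw [hlb]; omega)
  rwa [substr_drop _ _ _ _ hq1, show (i - b) + (q + c - 1) = (i - b + q) + c - 1 by omega] at h

end Main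

theorem stmt17 (r : List α → List α → Prop) (h : SCER r) (T : List α) (Bd L : ℕ → ℕ)
    (hB : BorderArr r T Bd) (hL : LCoverArr r T L) (i : ℕ)
    (h1 : 1 ≤ i) (h2 : i ≤ T.length) :
    (∀ C : List α, IsProperCover r C (T.take i) ↔
      (IsLeftSeed r C (T.take i) ∧ IsCover r C (T.take (Bd i)))) ∧
    IsGreatest (insert 0 {l | IsLeftSeed r (T.take l) (T.take i) ∧
      IsCover r (T.take l) (T.take (Bd i))}) (L i) := by
  have hTlen : (T.take i).length = i := by rw [List.length_take]; omega
  obtain ⟨hBmem, hBub⟩ := hB i h1 h2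
  obtain ⟨B0, hB0len, hbi, hB0le, hB0pre, hB0suf⟩ := hBmem
  set b := Bd i with hbdef
  have hbT : b ≤ T.length := by omega
  have hblen : (T.take b).length = b := by rw [List.length_take]; omega
  -- the fundamental border equivalence
  have hbord : r (T.take b) ((T.take i).drop (i - b)) := by
    rw [hB0len] at hB0pre hB0suf
    rw [hTlen] at hB0suf
    have hpre : (T.take i).take b = T.take b := by
      rw [List.take_take, min_eq_left (by omega : b ≤ i)]
    rw [hpre] at hB0pre
    exact h.equiv.trans (h.equiv.symm hB0pre) hB0suf
  -- the main equivalence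
  have main : ∀ C : List α, IsProperCover r C (T.take i) ↔
      (IsLeftSeed r C (T.take i) ∧ IsCover r C (T.take b)) := by
    intro C
    constructor
    · rintro ⟨hcov, hlt⟩
      rw [hTlen] at hlt
      set c := C.length with hcdef
      have hc1 : 1 ≤ c := hcov.pos (by omega)
      -- first and last occurrences
      have hocc1 : r C ((T.take i).take c) := by
        have := hcov.occ1
        rwa [show 1 + c - 1 = c by omega, substr_one] at this
      have hoccl : r C (substr (T.take i) (i - c + 1) ((i - c + 1) + c - 1)) := by
        have := hcov.occ_last
        rwa [hTlen] at this
      -- C itself is a border of T[1:i], hence c ≤ b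
      have hcb : c ≤ b := by
        refine hBub ⟨C, rfl, hlt, ?_, hocc1, ?_⟩
        · omega
        · rw [hTlen]
          have := hoccl
          rwa [show (i - c + 1) + c - 1 = i by omega,
            show substr (T.take i) (i - c + 1) i = ((T.take i).take i).drop (i - c) by
              simp [substr], List.take_take, min_self] at this
      constructor
      · -- left seed with k = l = 0
        refine ⟨0, 0, le_rfl, hc1, ?_, ?_⟩
        · rw [hTlen]
          have : (T.take i).take (i - 0) = T.take i := by
            rw [List.take_take]
            congr 1
            omega
          rw [this]
          exact hcov
        · rw [hTlen]
          simp only [List.take_zero, Nat.sub_zero]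
          rw [List.drop_of_length_le (by omega)]
          exact h.equiv.refl []
      · -- C covers the border T[1:b]
        refine cover_of_set C (T.take b)
          (fun p => 1 ≤ p ∧ p ≤ b - c + 1 ∧ r C (substr (T.take b) p (p + c - 1)))
          ⟨le_rfl, by omega, ?_⟩ ⟨by rw [hblen]; omega, by rw [hblen], ?_⟩
          (fun p hp => ⟨hp.1, by rw [hblen]; exact hp.2.1, hp.2.2⟩) ?_
        · rw [show 1 + c - 1 = c by omega, substr_one]
          have : (T.take b).take c = (T.take i).take c := by
            rw [List.take_take, List.take_take, min_eq_left (by omega : c ≤ b),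
              min_eq_left (by omega : c ≤ i)]
          rw [this]
          exact hocc1
        · rw [hblen]
          have htr := border_transport h hbi h2 hcb hc1 hbord (b - c + 1) (by omega) le_rfl
          rw [show i - b + (b - c + 1) = i - c + 1 by omega] at htr
          exact h.equiv.trans hoccl (h.equiv.symm htr)
        · rintro p ⟨hp1, hp2, hpocc⟩ hplt
          rw [hblen] at hplt
          obtain ⟨y, hy1, hy2, hy3, hy4, hy5⟩ := hcov.window hc1 (p + (i - b))
            (by rw [hTlen]; omega)
          rw [hTlen] at hy2
          refine ⟨y - (i - b), ⟨by omega, by omega, ?_⟩, by omega, by omega⟩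
          have htr := border_transport h hbi h2 hcb hc1 hbord (y - (i - b))
            (by omega) (by omega)
          rw [show i - b + (y - (i - b)) = y by omega] at htr
          exact h.equiv.trans hy5 (h.equiv.symm htr)
    · rintro ⟨⟨k, l, hkl, hlc, hcov1, _⟩, hcovb⟩
      set c := C.length with hcdef
      have hc1 : 1 ≤ c := by omega
      -- c ≤ b from the cover of the border
      have hcb : c ≤ b := by
        have := hcovb.occ1
        rw [show 1 + c - 1 = c by omega, substr_one] at this
        have hlen := h.length_eq _ _ this
        rw [List.length_take, List.length_take] at hlen
        omega
      have hclt : c < i := by omega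
      -- normalize the cover of the prefix T[1:i-k]
      rw [hTlen] at hcov1
      have hP1 : (T.take i).take (i - k) = T.take (i - k) := by
        rw [List.take_take, min_eq_left (by omega : i - k ≤ i)]
      rw [hP1] at hcov1
      have hP1len : (T.take (i - k)).length = i - k := by rw [List.length_take]; omega
      have hcik : c ≤ i - k := by
        have := hcov1.len_le h hc1
        omega
      constructor
      · -- build the cover of T[1:i] by stitching
        refine cover_of_set C (T.take i)
          (fun p => (1 ≤ p ∧ p ≤ (i - k) - c + 1 ∧ r C (substr (T.take (i - k)) p (p + c - 1)))
            ∨ (∃ y, 1 ≤ y ∧ y ≤ b - c + 1 ∧ r C (substr (T.take b) y (y + c - 1)) ∧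
                p = i - b + y))
          (Or.inl ⟨le_rfl, by omega, ?_⟩) (Or.inr ⟨b - c + 1, by omega, le_rfl, ?_, ?_⟩)
          ?_ ?_
        · exact hcov1.occ1
        · have := hcovb.occ_last
          rwa [hblen] at this
        · rw [hTlen]; omega
        · rintro p (⟨hp1, hp2, hpocc⟩ | ⟨y, hy1, hy2, hyocc, hyp⟩)
          · refine ⟨hp1, by rw [hTlen]; omega, ?_⟩
            rwa [substr_take T (i - k) p (p + c - 1) (by omega),
              ← substr_take T i p (p + c - 1) (by omega)] at hpocc
          · refine ⟨by omega, by rw [hTlen]; omega, ?_⟩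
            have htr := border_transport h hbi h2 hcb hc1 hbord y hy1 hy2
            rw [hyp]
            exact h.equiv.trans hyocc htr
        · rintro p hp hplt
          rw [hTlen] at hplt
          by_cases hcase : p < (i - k) - c + 1
          · obtain ⟨y, hy1, hy2, hy3, hy4, hy5⟩ := hcov1.window hc1 p
              (by rw [hP1len]; omega)
            rw [hP1len] at hy2
            exact ⟨y, Or.inl ⟨hy1, hy2, hy5⟩, hy3, hy4⟩
          · have hpS1 : 1 ≤ p ∧ p ≤ i - c + 1 := by
              rcases hp with ⟨hp1, hp2, _⟩ | ⟨y, hy1, hy2, _, hyp⟩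
              · exact ⟨hp1, by omega⟩
              · constructor <;> omega
            by_cases hcase2 : i - b ≤ p
            · obtain ⟨y, hy1, hy2, hy3, hy4, hy5⟩ := hcovb.window hc1 (p - (i - b))
                (by rw [hblen]; omega)
              rw [hblen] at hy2
              exact ⟨i - b + y, Or.inr ⟨y, hy1, hy2, hy5, rfl⟩, by omega, by omega⟩
            · refine ⟨i - b + 1, Or.inr ⟨1, le_rfl, by omega, ?_, rfl⟩, by omega, by omega⟩
              exact hcovb.occ1
      · rw [hTlen]; omega
  refine ⟨main, ?_⟩
  have hset : (insert 0 {c | ∃ C : List α, C.length = c ∧ IsProperCover r C (T.take i)})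
      = insert 0 {l | IsLeftSeed r (T.take l) (T.take i) ∧
        IsCover r (T.take l) (T.take b)} := by
    ext n
    simp only [Set.mem_insert_iff, Set.mem_setOf_eq]
    constructor
    · rintro (rfl | ⟨C, hClen, hprop⟩)
      · exact Or.inl rfl
      · right
        have hlt : C.length < i := by
          have := hprop.2; rwa [hTlen] at this
        have hc1 : 1 ≤ C.length := hprop.1.pos (by omega)
        have hocc1 : r C (T.take C.length) := by
          have := hprop.1.occ1
          rwa [show 1 + C.length - 1 = C.length by omega, substr_one, List.take_take,
            min_eq_left (by omega : C.length ≤ i)] at this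
        have hprop' : IsProperCover r (T.take n) (T.take i) := by
          refine ⟨hprop.1.congr h ?_, ?_⟩
          · rw [← hClen]; exact hocc1
          · rw [hTlen, List.length_take]; omega
        exact (main (T.take n)).mp hprop'
    · rintro (rfl | hpair)
      · exact Or.inl rfl
      · right
        have hprop := (main (T.take n)).mpr hpair
        refine ⟨T.take n, ?_, hprop⟩
        have := hprop.2
        rw [hTlen, List.length_take] at this
        rw [List.length_take]
        omega
  have hLi := hL i h1 h2
  rwa [hset] at hLi
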